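/- Let Σ be a symmetric positive definite n×n real matrix, D a (not necessarily invertible) n×n real matrix, and W a symmetric positive definite n×n real matrix. Then the matrix M := Σ⁻¹ - Dᵀ (D Σ Dᵀ + W)⁻¹ D is positive definite. -/
import Mathlib


open Matrix

/-- The Lyapunov decrement matrix `M = Σ⁻¹ - Dᵀ (D Σ Dᵀ + W)⁻¹ D` is positive definite
whenever `Σ ≻ 0` and `W ≻ 0` (`D` need not be invertible). -/
theorem lyapunov_decrement_posDef {n : ℕ}
    (S W D : Matrix (Fin n) (Fin n) ℝ) (hS : S.PosDef) (hW : W.PosDef) :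
    (S⁻¹ - Dᵀ * (D * S * Dᵀ + W)⁻¹ * D).PosDef := by
  have hSt : Sᵀ = S := hS.isHermitian
  set K : Matrix (Fin n) (Fin n) ℝ := D * S * Dᵀ + W with hKdef
  have hKpd : K.PosDef := by
    have : (D * S * Dᵀ).PosSemidef := by
      simpa [conjTranspose_eq_transpose_of_trivial] using
        hS.posSemidef.mul_mul_conjTranspose_same D
    exact Matrix.PosDef.posSemidef_add this hW
  set P : Matrix (Fin n) (Fin n) ℝ := S + S * Dᵀ * W⁻¹ * (D * S) with hPdef
  have hPpd : P.PosDef := by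
    have h1 : ((D * S)ᵀ * W⁻¹ * (D * S)).PosSemidef := by
      simpa [conjTranspose_eq_transpose_of_trivial] using
        hW.inv.posSemidef.conjTranspose_mul_mul_same (D * S)
    have h2 : (D * S)ᵀ = S * Dᵀ := by rw [transpose_mul, hSt]
    rw [h2] at h1
    exact hS.add_posSemidef (by simpa [mul_assoc] using h1)
  have hSu : IsUnit S.det := hS.det_pos.ne'.isUnit
  have hWu : IsUnit W.det := hW.det_pos.ne'.isUnit
  have hKu : IsUnit K.det := hKpd.det_pos.ne'.isUnit
  have h1 : D * P = K * (W⁻¹ * (D * S)) := by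
    rw [hPdef, hKdef]
    rw [mul_add, add_mul, mul_nonsing_inv_cancel_left _ _ hWu]
    rw [add_comm]
    simp [mul_assoc]
  have key : (S⁻¹ - Dᵀ * K⁻¹ * D) * P = 1 := by
    have h2 : Dᵀ * K⁻¹ * D * P = Dᵀ * (W⁻¹ * (D * S)) := by
      rw [mul_assoc, h1, ← mul_assoc, mul_assoc Dᵀ K⁻¹ K,
        nonsing_inv_mul _ hKu, mul_one]
    have h3 : S⁻¹ * P = 1 + Dᵀ * (W⁻¹ * (D * S)) := by
      rw [hPdef, mul_add, nonsing_inv_mul _ hSu]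
      congr 1
      rw [show S * Dᵀ * W⁻¹ * (D * S) = S * (Dᵀ * (W⁻¹ * (D * S))) by
        simp [mul_assoc]]
      rw [nonsing_inv_mul_cancel_left _ _ hSu]
    rw [sub_mul, h2, h3]
    abel
  have hP : S⁻¹ - Dᵀ * K⁻¹ * D = P⁻¹ := (inv_eq_left_inv key).symm
  rw [hP]
  exact hPpd.inv
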